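/- Let X be a dense subspace of a topological space Y. If every zero-set of X is the trace on X of a zero-set of Y (X is z-embedded) and every cozero-set of X is the trace of a cozero-set of Y, then X is a WCF-space if and only if Y is a WCF-space. -/
import Mathlib

open Set

/-- On a dense subset, a subset-of relation between an open set and a closed set
transfers from traces to the whole space. -/
lemma aux_dense_sub {Y : Type*} [TopologicalSpace Y] {X : Set Y} (hdense : Dense X)
    {U Z : Set Y} (hU : IsOpen U) (hZ : IsClosed Z)
    (h : (Subtype.val : X → Y) ⁻¹' U ⊆ (Subtype.val : X → Y) ⁻¹' Z) : U ⊆ Z := by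
  refine (hdense.open_subset_closure_inter hU).trans ?_
  rw [← hZ.closure_eq]
  apply closure_mono
  rintro y ⟨hyU, hyX⟩
  exact h (show (⟨y, hyX⟩ : X) ∈ (Subtype.val : X → Y) ⁻¹' U from hyU)

/-- For a closed set `Z` in `Y` and dense `X`, the interior (in `X`) of the trace of `Z`
is contained in the trace of the interior of `Z`. -/
lemma aux_interior {Y : Type*} [TopologicalSpace Y] {X : Set Y} (hdense : Dense X)
    {Z : Set Y} (hZ : IsClosed Z) :
    interior ((Subtype.val : X → Y) ⁻¹' Z) ⊆ (Subtype.val : X → Y) ⁻¹' (interior Z) := by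
  obtain ⟨U, hU, hUA⟩ :=
    isOpen_induced_iff.mp (isOpen_interior (s := (Subtype.val : X → Y) ⁻¹' Z))
  rw [← hUA]
  have hUZ : U ⊆ Z := aux_dense_sub hdense hU hZ (hUA ▸ interior_subset)
  exact Set.preimage_mono (interior_maximal hUZ hU)

/-- If `X` is a dense z-embedded subspace of `Y` (zero-sets and cozero-sets of `X` are
traces of zero-sets and cozero-sets of `Y`), then `X` is a WCF-space iff `Y` is. -/
theorem stmt14 {Y : Type*} [TopologicalSpace Y] [T2Space Y] [CompletelyRegularSpace Y]
    (X : Set Y) (hdense : Dense X)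
    (hz : ∀ f : C(X, ℝ), ∃ F : C(Y, ℝ),
      f ⁻¹' {0} = (Subtype.val : X → Y) ⁻¹' (F ⁻¹' {0}))
    (hcoz : ∀ f : C(X, ℝ), ∃ F : C(Y, ℝ),
      (f ⁻¹' {0})ᶜ = (Subtype.val : X → Y) ⁻¹' ((F ⁻¹' {0})ᶜ)) :
    (∀ f g : C(X, ℝ), (f ⁻¹' {0})ᶜ ∩ (g ⁻¹' {0})ᶜ = ∅ →
      ∃ h₁ h₂ : C(X, ℝ), (f ⁻¹' {0})ᶜ ⊆ h₁ ⁻¹' {0} ∧ (g ⁻¹' {0})ᶜ ⊆ h₂ ⁻¹' {0} ∧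
        interior (h₁ ⁻¹' {0}) ∩ interior (h₂ ⁻¹' {0}) = ∅) ↔
    (∀ f g : C(Y, ℝ), (f ⁻¹' {0})ᶜ ∩ (g ⁻¹' {0})ᶜ = ∅ →
      ∃ h₁ h₂ : C(Y, ℝ), (f ⁻¹' {0})ᶜ ⊆ h₁ ⁻¹' {0} ∧ (g ⁻¹' {0})ᶜ ⊆ h₂ ⁻¹' {0} ∧
        interior (h₁ ⁻¹' {0}) ∩ interior (h₂ ⁻¹' {0}) = ∅) := by
  have zc : ∀ (F : C(Y, ℝ)), IsClosed (F ⁻¹' {0}) :=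
    fun F => isClosed_singleton.preimage F.continuous
  constructor
  · -- X WCF → Y WCF
    intro hX F G hFG
    set f : C(X, ℝ) := F.restrict X with hf
    set g : C(X, ℝ) := G.restrict X with hg
    have hdisj : (f ⁻¹' {0})ᶜ ∩ (g ⁻¹' {0})ᶜ = ∅ :=
      Set.eq_empty_iff_forall_notMem.mpr fun x hx =>
        Set.eq_empty_iff_forall_notMem.mp hFG x.val ⟨hx.1, hx.2⟩
    obtain ⟨h₁, h₂, hsub₁, hsub₂, hint⟩ := hX f g hdisj
    obtain ⟨H₁, hH₁⟩ := hz h₁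
    obtain ⟨H₂, hH₂⟩ := hz h₂
    refine ⟨H₁, H₂, ?_, ?_, ?_⟩
    · refine aux_dense_sub hdense (zc F).isOpen_compl (zc H₁) ?_
      intro x hx
      have : x ∈ h₁ ⁻¹' {0} := hsub₁ hx
      rwa [hH₁] at this
    · refine aux_dense_sub hdense (zc G).isOpen_compl (zc H₂) ?_
      intro x hx
      have : x ∈ h₂ ⁻¹' {0} := hsub₂ hx
      rwa [hH₂] at this
    · refine Set.subset_empty_iff.mp
        (aux_dense_sub hdense (isOpen_interior.inter isOpen_interior) isClosed_empty ?_)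
      intro x hx
      have hx₁ : x ∈ interior (h₁ ⁻¹' {0}) := by
        rw [hH₁]
        exact preimage_interior_subset_interior_preimage continuous_subtype_val hx.1
      have hx₂ : x ∈ interior (h₂ ⁻¹' {0}) := by
        rw [hH₂]
        exact preimage_interior_subset_interior_preimage continuous_subtype_val hx.2
      exact absurd (hint ▸ Set.mem_inter hx₁ hx₂) (Set.notMem_empty x)
  · -- Y WCF → X WCF
    intro hY f g hfg
    obtain ⟨F, hF⟩ := hcoz f
    obtain ⟨G, hG⟩ := hcoz g
    have hFG : (F ⁻¹' {0})ᶜ ∩ (G ⁻¹' {0})ᶜ = ∅ := by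
      refine Set.subset_empty_iff.mp (aux_dense_sub hdense
        ((zc F).isOpen_compl.inter (zc G).isOpen_compl) isClosed_empty ?_)
      intro x hx
      have h1 : x ∈ (f ⁻¹' {0})ᶜ := by rw [hF]; exact hx.1
      have h2 : x ∈ (g ⁻¹' {0})ᶜ := by rw [hG]; exact hx.2
      exact absurd (hfg ▸ Set.mem_inter h1 h2) (Set.notMem_empty x)
    obtain ⟨H₁, H₂, hsub₁, hsub₂, hint⟩ := hY F G hFG
    refine ⟨H₁.restrict X, H₂.restrict X, ?_, ?_, ?_⟩
    · rw [hF]; exact fun x hx => hsub₁ hx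
    · rw [hG]; exact fun x hx => hsub₂ hx
    · have e₁ := aux_interior hdense (X := X) (zc H₁)
      have e₂ := aux_interior hdense (X := X) (zc H₂)
      refine Set.eq_empty_iff_forall_notMem.mpr fun x hx => ?_
      have hmem : x.val ∈ interior (H₁ ⁻¹' {0}) ∩ interior (H₂ ⁻¹' {0}) :=
        Set.mem_inter (e₁ hx.1) (e₂ hx.2)
      rw [hint] at hmem
      exact hmem
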